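/- If f is a real-valued function of A, B, C where B and C are conditionally independent given A (p_{ABC} = p_{AB} · p_{C|A}), then E_{AB}[Var_{C|AB}[f]] ≥ E_A[Var_{C|A}(E_{B|AC}[f])]. -/

import Mathlib

open Finset

noncomputable def expec {α : Type*} [Fintype α] (p f : α → ℝ) : ℝ := ∑ a, p a * f a

noncomputable def pVar {α : Type*} [Fintype α] (p f : α → ℝ) : ℝ :=
  expec p (fun a => f a ^ 2) - (expec p f) ^ 2

/-- `p` is a probability distribution on `α × β`. -/
def IsDist {α β : Type*} [Fintype α] [Fintype β] (p : α → β → ℝ) : Prop :=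
  (∀ a b, 0 ≤ p a b) ∧ (∑ a, ∑ b, p a b) = 1

noncomputable def margA {α β : Type*} [Fintype α] [Fintype β] (p : α → β → ℝ) : α → ℝ :=
  fun a => ∑ b, p a b

noncomputable def margB {α β : Type*} [Fintype α] [Fintype β] (p : α → β → ℝ) : β → ℝ :=
  fun b => ∑ a, p a b

/-- conditional expectation `E_{B|A=a}[f]` (with the convention `x / 0 = 0`). -/
noncomputable def condExpB {α β : Type*} [Fintype α] [Fintype β] (p f : α → β → ℝ) : α → ℝ :=
  fun a => (∑ b, p a b * f a b) / margA p a

/-- conditional expectation `E_{A|B=b}[f]` (with the convention `x / 0 = 0`). -/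
noncomputable def condExpA {α β : Type*} [Fintype α] [Fintype β] (p f : α → β → ℝ) : β → ℝ :=
  fun b => (∑ a, p a b * f a b) / margB p b

noncomputable def jointVar {α β : Type*} [Fintype α] [Fintype β] (p f : α → β → ℝ) : ℝ :=
  pVar (fun x : α × β => p x.1 x.2) (fun x => f x.1 x.2)

/-- `(l1, l2)` belongs to the maximal correlation ribbon of `p`:
`Var[f] ≥ l1 * Var_A E_{B|A}[f] + l2 * Var_B E_{A|B}[f]` for every `f`. -/
def memMC {α β : Type*} [Fintype α] [Fintype β] (p : α → β → ℝ) (l1 l2 : ℝ) : Prop :=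
  0 ≤ l1 ∧ 0 ≤ l2 ∧ ∀ f : α → β → ℝ,
    l1 * pVar (margA p) (condExpB p f) + l2 * pVar (margB p) (condExpA p f) ≤ jointVar p f

/-- Maximal correlation of the joint distribution `p`: the supremum of `E[f_A g_B]`
over mean-zero, unit-second-moment functions of `A` and of `B` (0 if no such pair exists,
since `Real.sSup ∅ = 0`). -/
noncomputable def maxCorr {α β : Type*} [Fintype α] [Fintype β] (p : α → β → ℝ) : ℝ :=
  sSup {r | ∃ f : α → ℝ, ∃ g : β → ℝ,
    expec (margA p) f = 0 ∧ expec (margB p) g = 0 ∧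
    expec (margA p) (fun a => f a ^ 2) = 1 ∧
    expec (margB p) (fun b => g b ^ 2) = 1 ∧
    r = ∑ a, ∑ b, p a b * f a * g b}

section
variable {A B C : Type*} [Fintype A] [Fintype B] [Fintype C]

noncomputable def pA3 (p : A → B → C → ℝ) (a : A) : ℝ := ∑ b, ∑ c, p a b c
noncomputable def pAB3 (p : A → B → C → ℝ) (a : A) (b : B) : ℝ := ∑ c, p a b c
noncomputable def pAC3 (p : A → B → C → ℝ) (a : A) (c : C) : ℝ := ∑ b, p a b c

/-- conditional variance `Var_{C|A=a,B=b}[f]` (convention `x / 0 = 0`). -/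
noncomputable def condVarCgivenAB (p f : A → B → C → ℝ) (a : A) (b : B) : ℝ :=
  (∑ c, p a b c * f a b c ^ 2) / pAB3 p a b
    - ((∑ c, p a b c * f a b c) / pAB3 p a b) ^ 2

/-- conditional expectation `E_{B|A=a,C=c}[f]` (convention `x / 0 = 0`). -/
noncomputable def condExpBgivenAC (p f : A → B → C → ℝ) (a : A) (c : C) : ℝ :=
  (∑ b, p a b c * f a b c) / pAC3 p a c

/-- conditional variance `Var_{C|A=a}[g]` of a function `g` of `(A,C)`
(convention `x / 0 = 0`). -/
noncomputable def condVarCgivenA (p : A → B → C → ℝ) (g : A → C → ℝ) (a : A) : ℝ :=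
  (∑ c, pAC3 p a c * g a c ^ 2) / pA3 p a
    - ((∑ c, pAC3 p a c * g a c) / pA3 p a) ^ 2

end


private lemma sos_key {B C : Type} [Fintype B] [Fintype C]
    (q F : B → C → ℝ) (u : C → ℝ) (v : B → ℝ) (m : ℝ)
    (hq : ∀ b c, 0 ≤ q b c)
    (h2 : ∀ c, ∑ b, q b c * F b c = (∑ b, q b c) * u c)
    (h3 : ∀ b, ∑ c, q b c * F b c = (∑ c, q b c) * v b)
    (h6 : ∀ c, ∑ b, q b c * v b = (∑ b, q b c) * m)
    (h7 : ∀ b, ∑ c, q b c * u c = (∑ c, q b c) * m) :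
    (∑ c, (∑ b, q b c) * u c ^ 2) + ∑ b, (∑ c, q b c) * v b ^ 2
      ≤ (∑ b, ∑ c, q b c * F b c ^ 2) + (∑ b, ∑ c, q b c) * m ^ 2 := by
  have hpos : 0 ≤ ∑ b, ∑ c, q b c * (F b c - u c - v b + m) ^ 2 :=
    Finset.sum_nonneg fun b _ => Finset.sum_nonneg fun c _ =>
      mul_nonneg (hq b c) (sq_nonneg _)
  have hinner : ∀ b, ∑ c, q b c * (F b c - u c - v b + m) ^ 2
      = (∑ c, q b c * (F b c - u c) ^ 2) - (∑ c, q b c) * (v b - m) ^ 2 := by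
    intro b
    have hlin : ∑ c, q b c * (F b c - u c) = (∑ c, q b c) * (v b - m) := by
      have e : ∑ c, q b c * (F b c - u c)
          = (∑ c, q b c * F b c) - ∑ c, q b c * u c := by
        rw [← Finset.sum_sub_distrib]
        exact Finset.sum_congr rfl fun c _ => by ring
      rw [e, h3 b, h7 b]; ring
    have expand : ∀ c, q b c * (F b c - u c - v b + m) ^ 2
        = q b c * (F b c - u c) ^ 2 - (2 * (v b - m)) * (q b c * (F b c - u c))
          + (v b - m) ^ 2 * q b c := fun c => by ring
    calc ∑ c, q b c * (F b c - u c - v b + m) ^ 2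
        = (∑ c, q b c * (F b c - u c) ^ 2)
            - (2 * (v b - m)) * (∑ c, q b c * (F b c - u c))
            + (v b - m) ^ 2 * (∑ c, q b c) := by
          simp only [expand]
          rw [Finset.sum_add_distrib, Finset.sum_sub_distrib,
            ← Finset.mul_sum, ← Finset.mul_sum]
      _ = _ := by rw [hlin]; ring
  have houter1 : ∑ b, ∑ c, q b c * (F b c - u c) ^ 2
      = (∑ b, ∑ c, q b c * F b c ^ 2) - ∑ c, (∑ b, q b c) * u c ^ 2 := by
    calc ∑ b, ∑ c, q b c * (F b c - u c) ^ 2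
        = ∑ c, ∑ b, q b c * (F b c - u c) ^ 2 := Finset.sum_comm
      _ = ∑ c, ((∑ b, q b c * F b c ^ 2) - (∑ b, q b c) * u c ^ 2) := by
          refine Finset.sum_congr rfl fun c _ => ?_
          have expand : ∀ b, q b c * (F b c - u c) ^ 2
              = q b c * F b c ^ 2 - (2 * u c) * (q b c * F b c)
                + u c ^ 2 * q b c := fun b => by ring
          simp only [expand]
          rw [Finset.sum_add_distrib, Finset.sum_sub_distrib,
            ← Finset.mul_sum, ← Finset.mul_sum, h2 c]
          ring
      _ = (∑ c, ∑ b, q b c * F b c ^ 2) - ∑ c, (∑ b, q b c) * u c ^ 2 :=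
          Finset.sum_sub_distrib _ _
      _ = (∑ b, ∑ c, q b c * F b c ^ 2) - ∑ c, (∑ b, q b c) * u c ^ 2 := by
          rw [show (∑ c, ∑ b, q b c * F b c ^ 2) = ∑ b, ∑ c, q b c * F b c ^ 2
            from Finset.sum_comm]
  have hBv : ∑ b, (∑ c, q b c) * v b = (∑ b, ∑ c, q b c) * m := by
    have e1 : ∑ b, (∑ c, q b c) * v b = ∑ b, ∑ c, q b c * F b c :=
      Finset.sum_congr rfl fun b _ => (h3 b).symm
    have e2 : (∑ b, ∑ c, q b c * F b c) = ∑ c, ∑ b, q b c * u c := by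
      rw [Finset.sum_comm]
      refine Finset.sum_congr rfl fun c _ => ?_
      rw [h2 c, Finset.sum_mul]
    have e4 : (∑ c, ∑ b, q b c * u c) = ∑ b, ∑ c, q b c * u c := Finset.sum_comm
    have e5 : (∑ b, ∑ c, q b c * u c) = ∑ b, (∑ c, q b c) * m :=
      Finset.sum_congr rfl fun b _ => h7 b
    rw [e1, e2, e4, e5, ← Finset.sum_mul]
  have houter2 : ∑ b, (∑ c, q b c) * (v b - m) ^ 2
      = (∑ b, (∑ c, q b c) * v b ^ 2) - (∑ b, ∑ c, q b c) * m ^ 2 := by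
    have expand : ∀ b, (∑ c, q b c) * (v b - m) ^ 2
        = (∑ c, q b c) * v b ^ 2 - (2 * m) * ((∑ c, q b c) * v b)
          + m ^ 2 * (∑ c, q b c) := fun b => by ring
    simp only [expand]
    rw [Finset.sum_add_distrib, Finset.sum_sub_distrib,
      ← Finset.mul_sum, ← Finset.mul_sum, hBv]
    ring
  have hid : ∑ b, ∑ c, q b c * (F b c - u c - v b + m) ^ 2
      = (∑ b, ∑ c, q b c * F b c ^ 2) - (∑ c, (∑ b, q b c) * u c ^ 2)
        - (∑ b, (∑ c, q b c) * v b ^ 2) + (∑ b, ∑ c, q b c) * m ^ 2 := by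
    simp only [hinner]
    rw [Finset.sum_sub_distrib, houter1, houter2]
    ring
  rw [hid] at hpos
  linarith

/-- if `B` and `C` are conditionally independent given `A`, then
`E_{AB}[Var_{C|AB}[f]] ≥ E_A[Var_{C|A}(E_{B|AC}[f])]`. -/
theorem expec_condVar_ge {A B C : Type} [Fintype A] [Fintype B] [Fintype C]
    (p f : A → B → C → ℝ)
    (hnn : ∀ a b c, 0 ≤ p a b c)
    (htot : (∑ a, ∑ b, ∑ c, p a b c) = 1)
    (hci : ∀ a b c, p a b c * pA3 p a = pAB3 p a b * pAC3 p a c) :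
    (∑ a, pA3 p a * condVarCgivenA p (condExpBgivenAC p f) a)
      ≤ ∑ a, ∑ b, pAB3 p a b * condVarCgivenAB p f a b := by
  refine Finset.sum_le_sum fun a _ => ?_
  have hPann : 0 ≤ pA3 p a :=
    Finset.sum_nonneg fun b _ => Finset.sum_nonneg fun c _ => hnn a b c
  rcases eq_or_lt_of_le hPann with hPa | hPa
  · have hz : ∀ b c, p a b c = 0 := by
      intro b c
      have h1 := (Finset.sum_eq_zero_iff_of_nonneg
        (fun b _ => Finset.sum_nonneg fun c _ => hnn a b c)).mp hPa.symm b
        (Finset.mem_univ b)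
      exact (Finset.sum_eq_zero_iff_of_nonneg fun c _ => hnn a b c).mp h1 c
        (Finset.mem_univ c)
    simp [← hPa, condVarCgivenAB, pAB3, hz]
  · have hPane : pA3 p a ≠ 0 := ne_of_gt hPa
    set S := ∑ b, ∑ c, p a b c * f a b c with hS
    have hCI : ∀ b c, p a b c = pAB3 p a b * pAC3 p a c / pA3 p a := by
      intro b c
      rw [eq_div_iff hPane]
      exact hci a b c
    have hq : ∀ b c, 0 ≤ p a b c := fun b c => hnn a b c
    have h2 : ∀ c, ∑ b, p a b c * f a b c = pAC3 p a c * condExpBgivenAC p f a c := by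
      intro c
      by_cases hc : pAC3 p a c = 0
      · have hz : ∀ b, p a b c = 0 := fun b =>
          (Finset.sum_eq_zero_iff_of_nonneg fun b _ => hnn a b c).mp hc b
            (Finset.mem_univ b)
        simp [condExpBgivenAC, hz]
      · simp only [condExpBgivenAC]
        field_simp
    have h3 : ∀ b, ∑ c, p a b c * f a b c
        = pAB3 p a b * ((∑ c, p a b c * f a b c) / pAB3 p a b) := by
      intro b
      by_cases hb : pAB3 p a b = 0
      · have hz : ∀ c, p a b c = 0 := fun c =>
          (Finset.sum_eq_zero_iff_of_nonneg fun c _ => hnn a b c).mp hb c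
            (Finset.mem_univ c)
        simp [hz]
      · field_simp
    have hSu : (∑ c, pAC3 p a c * condExpBgivenAC p f a c) = S := by
      rw [hS, show (∑ b, ∑ c, p a b c * f a b c) = ∑ c, ∑ b, p a b c * f a b c
        from Finset.sum_comm]
      exact Finset.sum_congr rfl fun c _ => (h2 c).symm
    have hSv : (∑ b, pAB3 p a b * ((∑ c, p a b c * f a b c) / pAB3 p a b)) = S :=
      Finset.sum_congr rfl fun b _ => (h3 b).symm
    have h6 : ∀ c, ∑ b, p a b c * ((∑ c', p a b c' * f a b c') / pAB3 p a b)
        = pAC3 p a c * (S / pA3 p a) := by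
      intro c
      calc ∑ b, p a b c * ((∑ c', p a b c' * f a b c') / pAB3 p a b)
          = ∑ b, pAC3 p a c / pA3 p a
              * (pAB3 p a b * ((∑ c', p a b c' * f a b c') / pAB3 p a b)) := by
            refine Finset.sum_congr rfl fun b _ => ?_
            rw [hCI b c]; ring
        _ = pAC3 p a c / pA3 p a
              * ∑ b, pAB3 p a b * ((∑ c', p a b c' * f a b c') / pAB3 p a b) := by
            rw [← Finset.mul_sum]
        _ = pAC3 p a c * (S / pA3 p a) := by rw [hSv]; ring
    have h7 : ∀ b, ∑ c, p a b c * condExpBgivenAC p f a c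
        = pAB3 p a b * (S / pA3 p a) := by
      intro b
      calc ∑ c, p a b c * condExpBgivenAC p f a c
          = ∑ c, pAB3 p a b / pA3 p a * (pAC3 p a c * condExpBgivenAC p f a c) := by
            refine Finset.sum_congr rfl fun c _ => ?_
            rw [hCI b c]; ring
        _ = pAB3 p a b / pA3 p a * ∑ c, pAC3 p a c * condExpBgivenAC p f a c := by
            rw [← Finset.mul_sum]
        _ = pAB3 p a b * (S / pA3 p a) := by rw [hSu]; ring
    have key : (∑ c, pAC3 p a c * condExpBgivenAC p f a c ^ 2)
        + (∑ b, pAB3 p a b * ((∑ c, p a b c * f a b c) / pAB3 p a b) ^ 2)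
        ≤ (∑ b, ∑ c, p a b c * f a b c ^ 2) + pA3 p a * (S / pA3 p a) ^ 2 :=
      sos_key (fun b c => p a b c) (fun b c => f a b c)
        (fun c => condExpBgivenAC p f a c)
        (fun b => (∑ c, p a b c * f a b c) / pAB3 p a b) (S / pA3 p a)
        hq h2 h3 h6 h7
    have lhs_eq : pA3 p a * condVarCgivenA p (condExpBgivenAC p f) a
        = (∑ c, pAC3 p a c * condExpBgivenAC p f a c ^ 2)
          - pA3 p a * (S / pA3 p a) ^ 2 := by
      simp only [condVarCgivenA]
      rw [hSu, mul_sub]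
      congr 1
      field_simp
    have rhs_eq : (∑ b, pAB3 p a b * condVarCgivenAB p f a b)
        = (∑ b, ∑ c, p a b c * f a b c ^ 2)
          - ∑ b, pAB3 p a b * ((∑ c, p a b c * f a b c) / pAB3 p a b) ^ 2 := by
      rw [← Finset.sum_sub_distrib]
      refine Finset.sum_congr rfl fun b _ => ?_
      by_cases hb : pAB3 p a b = 0
      · have hz : ∀ c, p a b c = 0 := fun c =>
          (Finset.sum_eq_zero_iff_of_nonneg fun c _ => hnn a b c).mp hb c
            (Finset.mem_univ c)
        simp [condVarCgivenAB, hb, hz]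
      · simp only [condVarCgivenAB]
        field_simp
    rw [lhs_eq, rhs_eq]
    linarith
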